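/- Let V be a C_1-cofinite ℤ₊-graded vertex algebra with C_1-generators u^1,…,u^l satisfying C_1-relations u^i_k u^j = R(i,j,k) for k ≥ 0. Then in Zhu's algebra A(V), the commutator of the generator images satisfies [o(u^i), o(u^j)] = Σ_{k≥0} C(wt u^i − 1, k) o(R(i,j,k)). -/

import Mathlib

noncomputable section

open scoped BigOperators

/-- The generalized binomial coefficient `C(n, k)` for `n : ℤ`, `k : ℕ`, valued in `ℂ`. -/
def zchoose (n : ℤ) (k : ℕ) : ℂ :=
  (∏ i ∈ Finset.range k, ((n : ℂ) - (i : ℂ))) / (k.factorial : ℂ)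

/-- A vertex algebra over `ℂ`: a state-field correspondence given by modes
`mode u n : V →ₗ[ℂ] V` (the coefficient `u_n` of `Y(u,z) = ∑ u_n z^{-n-1}`), a vacuum `𝟙`
with `Y(𝟙,z) = id`, creation property, truncation, and the Jacobi identity in the
equivalent form of the Borcherds identity on modes. -/
structure VertexAlgebra (V : Type*) [AddCommGroup V] [Module ℂ V] where
  mode : V →ₗ[ℂ] ℤ → V →ₗ[ℂ] V
  vacuum : V
  vacuum_mode : ∀ (n : ℤ) (v : V), mode vacuum n v = if n = -1 then v else 0
  creation : ∀ u : V, mode u (-1) vacuum = u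
  creation_nonneg : ∀ (u : V) (n : ℤ), 0 ≤ n → mode u n vacuum = 0
  truncation : ∀ u v : V, ∃ N : ℕ, ∀ n : ℕ, N ≤ n → mode u (n : ℤ) v = 0
  borcherds : ∀ (u v w : V) (p q r : ℤ),
    ∑ᶠ i : ℕ, zchoose p i • mode (mode u (r + (i : ℤ)) v) (p + q - (i : ℤ)) w
      = ∑ᶠ i : ℕ, ((-1 : ℂ) ^ i * zchoose r i) •
          (mode u (p + r - (i : ℤ)) (mode v (q + (i : ℤ)) w)
            - ((-1 : ℂ) ^ r) • mode v (q + r - (i : ℤ)) (mode u (p + (i : ℤ)) w))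

/-- A `ℤ₊`-graded vertex algebra: `V = ⊕_{n ≥ 0} V_n` with `dim V_0 = 1`, vacuum of
weight `0`, and `u_m w ∈ V_{i+j-m-1}` for `u ∈ V_i`, `w ∈ V_j` (the supremum below
being `⊥` when `i + j - m - 1 < 0`). -/
structure GradedVertexAlgebra (V : Type*) [AddCommGroup V] [Module ℂ V]
    extends VertexAlgebra V where
  grade : ℕ → Submodule ℂ V
  decomp : DirectSum.Decomposition grade
  vacuum_mem : vacuum ∈ grade 0
  grade_zero_dim : Module.finrank ℂ (grade 0) = 1
  mode_grade : ∀ (i j : ℕ) (m : ℤ) (u w : V), u ∈ grade i → w ∈ grade j →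
    mode u m w ∈ ⨆ (k : ℕ) (_ : (k : ℤ) = (i : ℤ) + (j : ℤ) - m - 1), grade k

namespace GradedVertexAlgebra

variable {V : Type*} [AddCommGroup V] [Module ℂ V]

/-- `V_+ = ⊕_{n ≥ 1} V_n`. -/
def Vplus (W : GradedVertexAlgebra V) : Submodule ℂ V :=
  ⨆ n : {n : ℕ // 1 ≤ n}, W.grade n

/-- `C_1(V)`: the span of all `u_{-1}v` and `u_{-2}𝟙` for `u, v ∈ V_+`. -/
def C1 (W : GradedVertexAlgebra V) : Submodule ℂ V :=
  Submodule.span ℂ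
    ({x | ∃ u ∈ W.Vplus, ∃ v ∈ W.Vplus, x = W.mode u (-1) v} ∪
     {x | ∃ u ∈ W.Vplus, x = W.mode u (-2) W.vacuum})

/-- Zhu's product `u ∗ v = Res_z Y(u,z)v (1+z)^k / z = ∑_i C(k,i) u_{i-1} v` for `u`
homogeneous of weight `k`. -/
def starH (W : GradedVertexAlgebra V) (k : ℕ) (u v : V) : V :=
  ∑ i ∈ Finset.range (k + 1), (k.choose i : ℂ) • W.mode u ((i : ℤ) - 1) v

/-- `u ∘ v = Res_z Y(u,z)v (1+z)^k / z² = ∑_i C(k,i) u_{i-2} v` for `u` homogeneous of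
weight `k`. -/
def circH (W : GradedVertexAlgebra V) (k : ℕ) (u v : V) : V :=
  ∑ i ∈ Finset.range (k + 1), (k.choose i : ℂ) • W.mode u ((i : ℤ) - 2) v

/-- `O(V)`: the span of all `u ∘ v` for homogeneous `u` and arbitrary `v`. -/
def O (W : GradedVertexAlgebra V) : Submodule ℂ V :=
  Submodule.span ℂ {x | ∃ (k : ℕ) (u v : V), u ∈ W.grade k ∧ x = W.circH k u v}

/-- The homogeneous component of weight `k` of a vector. -/
noncomputable def component (W : GradedVertexAlgebra V) (k : ℕ) (v : V) : V :=
  letI := W.decomp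
  ((DirectSum.decompose W.grade v) k : V)

/-- Zhu's product `∗` on all of `V`, extended linearly from homogeneous first arguments. -/
noncomputable def gstar (W : GradedVertexAlgebra V) (u v : V) : V :=
  ∑ᶠ k : ℕ, W.starH k (W.component k u) v

end GradedVertexAlgebra

section ZhuAux

lemma zc_zero (r : ℤ) : zchoose r 0 = 1 := by simp [zchoose]

lemma zc_one (r : ℤ) : zchoose r 1 = (r : ℂ) := by simp [zchoose]

lemma zc_neg_one (i : ℕ) : zchoose (-1) i = (-1 : ℂ) ^ i := by
  induction i with
  | zero => simp [zchoose]
  | succ n ih =>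
      have hfac : ((n.factorial : ℂ)) ≠ 0 := by exact_mod_cast n.factorial_ne_zero
      have h1 : zchoose (-1) (n+1) = zchoose (-1) n * ((-1 : ℂ) - n) / (n+1) := by
        simp only [zchoose, Finset.prod_range_succ, Nat.factorial_succ]
        push_cast
        field_simp
      rw [h1, ih]
      have hne : ((n:ℂ)+1) ≠ 0 := Nat.cast_add_one_ne_zero n
      field_simp [pow_succ]
      ring

namespace GradedVertexAlgebra

variable {V : Type*} [AddCommGroup V] [Module ℂ V] (W : GradedVertexAlgebra V)

lemma mode_zero_left (n : ℤ) (w : V) : W.mode 0 n w = 0 := by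
  rw [map_zero]
  rfl

lemma mode_smul_left (c : ℂ) (u : V) (n : ℤ) (w : V) :
    W.mode (c • u) n w = c • W.mode u n w := by
  rw [map_smul]
  rfl

lemma mode_mem_grade {gi gj : ℕ} {u w : V} (hu : u ∈ W.grade gi) (hw : w ∈ W.grade gj)
    (m : ℤ) (c : ℕ) (hc : (c : ℤ) = (gi : ℤ) + gj - m - 1) :
    W.mode u m w ∈ W.grade c := by
  have h := W.mode_grade gi gj m u w hu hw
  have heq : (⨆ (k : ℕ) (_ : (k : ℤ) = (gi : ℤ) + gj - m - 1), W.grade k) = W.grade c := by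
    apply le_antisymm
    · refine iSup_le fun k => iSup_le fun hk => ?_
      have hkc : k = c := by exact_mod_cast hk.trans hc.symm
      exact hkc ▸ le_rfl
    · exact le_iSup_of_le c (le_iSup_of_le hc le_rfl)
  exact heq ▸ h

lemma mode_eq_zero {gi gj : ℕ} {u w : V} (hu : u ∈ W.grade gi) (hw : w ∈ W.grade gj)
    (m : ℤ) (h : (gi : ℤ) + gj - m - 1 < 0) : W.mode u m w = 0 := by
  have h2 := W.mode_grade gi gj m u w hu hw
  have heq : (⨆ (k : ℕ) (_ : (k : ℤ) = (gi : ℤ) + gj - m - 1), W.grade k) = ⊥ := by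
    rw [eq_bot_iff]
    refine iSup_le fun k => iSup_le fun hk => absurd hk (by omega)
  rw [heq] at h2
  simpa using h2

lemma D_mode (u w : V) (m : ℤ) :
    W.mode (W.mode u (-2) W.vacuum) m w = (-(m : ℂ)) • W.mode u (m-1) w := by
  have hb := W.borcherds u W.vacuum w (m+1) (-1) (-2)
  have hL : (∑ᶠ i : ℕ, zchoose (m+1) i •
        W.mode (W.mode u (-2 + (i : ℤ)) W.vacuum) ((m+1) + (-1) - (i : ℤ)) w)
      = W.mode (W.mode u (-2) W.vacuum) m w + ((m+1 : ℤ) : ℂ) • W.mode u (m-1) w := by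
    rw [finsum_eq_sum_of_support_subset _ (s := Finset.range 2) ?_]
    · rw [Finset.sum_range_succ, Finset.sum_range_one]
      have e0 : ((-2 : ℤ) + (0 : ℕ)) = -2 := by omega
      have e1 : ((m + 1 + (-1) - ((0 : ℕ) : ℤ))) = m := by omega
      have e2 : ((-2 : ℤ) + ((1 : ℕ) : ℤ)) = -1 := by omega
      have e3 : ((m + 1 + (-1) - ((1 : ℕ) : ℤ))) = m - 1 := by omega
      rw [e0, e1, e2, e3, W.creation, zc_zero, zc_one, one_smul]
    · refine Function.support_subset_iff'.mpr fun i hi => ?_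
      have h2 : 2 ≤ i := by simp at hi; omega
      have hcn : W.mode u (-2 + (i : ℤ)) W.vacuum = 0 :=
        W.creation_nonneg u _ (by omega)
      rw [hcn, W.mode_zero_left, smul_zero]
  have hR : (∑ᶠ i : ℕ, ((-1 : ℂ) ^ i * zchoose (-2) i) •
        (W.mode u ((m+1) + (-2) - (i : ℤ)) (W.mode W.vacuum ((-1) + (i : ℤ)) w)
          - ((-1 : ℂ) ^ (-2 : ℤ)) •
            W.mode W.vacuum ((-1) + (-2) - (i : ℤ)) (W.mode u ((m+1) + (i : ℤ)) w)))
      = W.mode u (m-1) w := by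
    rw [finsum_eq_single _ 0 ?_]
    · have e1 : ((-1 : ℤ) + ((0 : ℕ) : ℤ)) = -1 := by omega
      rw [e1, W.vacuum_mode, if_pos rfl]
      have e2 : ((-1 : ℤ) + (-2) - ((0 : ℕ) : ℤ)) = -3 := by omega
      rw [e2, W.vacuum_mode, if_neg (by norm_num), smul_zero, sub_zero]
      have e3 : (m + 1 + (-2) - ((0 : ℕ) : ℤ)) = m - 1 := by omega
      rw [e3, zc_zero]
      norm_num
    · intro i hi
      have h1 : 1 ≤ i := Nat.one_le_iff_ne_zero.mpr hi
      have hv1 : W.mode W.vacuum ((-1) + (i : ℤ)) w = 0 := by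
        rw [W.vacuum_mode, if_neg (by omega)]
      have hv2 : W.mode W.vacuum ((-1) + (-2) - (i : ℤ))
          (W.mode u ((m+1) + (i : ℤ)) w) = 0 := by
        rw [W.vacuum_mode, if_neg (by omega)]
      rw [hv1, hv2, map_zero, smul_zero, sub_zero, smul_zero]
  rw [hL, hR] at hb
  have : W.mode (W.mode u (-2) W.vacuum) m w
      = (1 - ((m+1 : ℤ) : ℂ)) • W.mode u (m-1) w := by
    rw [sub_smul, one_smul]
    exact eq_sub_of_add_eq hb
  rw [this]
  congr 1
  push_cast
  ring

lemma skew (u v : V) (r : ℤ) :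
    (∑ᶠ i : ℕ, ((-1 : ℂ) ^ i) • W.mode (W.mode u (r + (i : ℤ)) v) (-1 - (i : ℤ)) W.vacuum)
      = -(((-1 : ℂ) ^ r) • W.mode v r u) := by
  have hb := W.borcherds u v W.vacuum (-1) 0 r
  have hL : (∑ᶠ i : ℕ, zchoose (-1) i •
        W.mode (W.mode u (r + (i : ℤ)) v) ((-1) + 0 - (i : ℤ)) W.vacuum)
      = ∑ᶠ i : ℕ, ((-1 : ℂ) ^ i) •
          W.mode (W.mode u (r + (i : ℤ)) v) (-1 - (i : ℤ)) W.vacuum := by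
    refine finsum_congr fun i => ?_
    rw [zc_neg_one]
    norm_num
  have hR : (∑ᶠ i : ℕ, ((-1 : ℂ) ^ i * zchoose r i) •
        (W.mode u ((-1) + r - (i : ℤ)) (W.mode v (0 + (i : ℤ)) W.vacuum)
          - ((-1 : ℂ) ^ r) • W.mode v (0 + r - (i : ℤ)) (W.mode u ((-1) + (i : ℤ)) W.vacuum)))
      = -(((-1 : ℂ) ^ r) • W.mode v r u) := by
    rw [finsum_eq_single _ 0 ?_]
    · have hv0 : W.mode v (0 + ((0 : ℕ) : ℤ)) W.vacuum = 0 :=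
        W.creation_nonneg v _ (by norm_num)
      have hu0 : W.mode u ((-1) + ((0 : ℕ) : ℤ)) W.vacuum = u := by
        norm_num [W.creation]
      have e : (0 + r - ((0 : ℕ) : ℤ)) = r := by omega
      rw [hv0, map_zero, hu0, e, zc_zero, zero_sub]
      norm_num
    · intro i hi
      have h1 : 1 ≤ i := Nat.one_le_iff_ne_zero.mpr hi
      have hv : W.mode v (0 + (i : ℤ)) W.vacuum = 0 :=
        W.creation_nonneg v _ (by omega)
      have hu : W.mode u ((-1) + (i : ℤ)) W.vacuum = 0 :=
        W.creation_nonneg u _ (by omega)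
      rw [hv, hu, map_zero, map_zero, smul_zero, sub_zero, smul_zero]
  rw [hL] at hb
  rw [hb, hR]

lemma mkQ_D {n : ℕ} {x : V} (hx : x ∈ W.grade n) :
    W.O.mkQ (W.mode x (-2) W.vacuum) = (-(n : ℂ)) • W.O.mkQ x := by
  have hmem : W.circH n x W.vacuum ∈ W.O :=
    Submodule.subset_span ⟨n, x, W.vacuum, hx, rfl⟩
  have hval : W.circH n x W.vacuum = W.mode x (-2) W.vacuum + (n : ℂ) • x := by
    unfold GradedVertexAlgebra.circH
    rcases Nat.eq_zero_or_pos n with h0 | h1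
    · subst h0
      rw [Finset.sum_range_one]
      have e0 : (((0 : ℕ) : ℤ) - 2) = -2 := by omega
      rw [e0]
      norm_num
    · have hsub : ({0, 1} : Finset ℕ) ⊆ Finset.range (n+1) := by
        intro t ht
        simp only [Finset.mem_insert, Finset.mem_singleton] at ht
        rcases ht with h | h <;> simp [h] <;> omega
      rw [← Finset.sum_subset hsub ?_]
      · rw [Finset.sum_pair (by norm_num : (0 : ℕ) ≠ 1)]
        have e0 : (((0 : ℕ) : ℤ) - 2) = -2 := by omega
        have e1 : (((1 : ℕ) : ℤ) - 2) = -1 := by omega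
        rw [e0, e1, W.creation, Nat.choose_one_right]
        norm_num
      · intro t ht hts
        have h2 : 2 ≤ t := by
          simp only [Finset.mem_insert, Finset.mem_singleton] at hts
          omega
        rw [W.creation_nonneg x _ (by omega), smul_zero]
  have hz : W.O.mkQ (W.circH n x W.vacuum) = 0 := by
    rw [Submodule.mkQ_apply, Submodule.Quotient.mk_eq_zero]
    exact hmem
  rw [hval, map_add, map_smul, add_eq_zero_iff_eq_neg] at hz
  rw [hz, neg_smul]

lemma mkQ_Di (i : ℕ) : ∀ (n : ℕ) (x : V), x ∈ W.grade n →
    W.O.mkQ (W.mode x (-1 - (i : ℤ)) W.vacuum)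
      = ((-1 : ℂ) ^ i * ((n + i - 1).choose i : ℂ)) • W.O.mkQ x := by
  induction i with
  | zero =>
      intro n x hx
      have e : ((-1 : ℤ) - ((0 : ℕ) : ℤ)) = -1 := by omega
      rw [e, W.creation]
      norm_num
  | succ i ih =>
      intro n x hx
      have hDx : W.mode x (-2) W.vacuum ∈ W.grade (n+1) :=
        W.mode_mem_grade hx W.vacuum_mem (-2) (n+1) (by push_cast; ring)
      have hT := W.D_mode x W.vacuum (-1 - (i : ℤ))
      have h1 := ih (n+1) _ hDx
      rw [hT] at h1
      have e1 : ((-1 : ℤ) - (i : ℤ) - 1) = -1 - ((i + 1 : ℕ) : ℤ) := by push_cast; ring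
      have e2 : -(((-1 - (i : ℤ) : ℤ)) : ℂ) = ((1 : ℂ) + i) := by push_cast; ring
      rw [e1, e2, map_smul, W.mkQ_D hx] at h1
      have hne : ((1 : ℂ) + i) ≠ 0 := by
        have := Nat.cast_add_one_ne_zero (R := ℂ) i
        intro h
        apply this
        rw [add_comm] at h
        exact_mod_cast h
      have e3 : n + 1 + i - 1 = n + i := by omega
      rw [e3] at h1
      apply smul_right_injective (V ⧸ W.O) hne
      dsimp only
      rw [h1, smul_smul, smul_smul]
      congr 1
      have hnat : ((n + i).choose (i + 1) : ℂ) * (i + 1) = ((n + i).choose i : ℂ) * n := by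
        have h := Nat.choose_succ_right_eq (n + i) i
        rw [Nat.add_sub_cancel] at h
        exact_mod_cast congrArg (Nat.cast : ℕ → ℂ) h
      have e4 : n + (i + 1) - 1 = n + i := by omega
      rw [e4]
      calc (-1 : ℂ) ^ i * ((n + i).choose i : ℂ) * -(n : ℂ)
          = -((-1 : ℂ) ^ i) * (((n + i).choose i : ℂ) * n) := by ring
        _ = -((-1 : ℂ) ^ i) * (((n + i).choose (i+1) : ℂ) * (i + 1)) := by rw [← hnat]
        _ = ((1 : ℂ) + i) * ((-1 : ℂ) ^ (i+1) * ((n + i).choose (i+1) : ℂ)) := by ring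

lemma mkQ_mode_rev {ki kj : ℕ} {ui uj : V} (hi : ui ∈ W.grade ki) (hj : uj ∈ W.grade kj)
    (hki : 1 ≤ ki) (m : ℕ) (hm : m ≤ kj) :
    W.O.mkQ (W.mode uj ((m : ℤ) - 1) ui)
      = (-1 : ℂ) ^ m • ∑ i ∈ Finset.range (ki + kj + 1 - m),
          ((ki - 1 + kj - m).choose i : ℂ) •
            W.O.mkQ (W.mode ui (((m + i : ℕ) : ℤ) - 1) uj) := by
  have hskew := W.skew ui uj ((m : ℤ) - 1)
  have hpow : ((-1 : ℂ)) ^ ((m : ℤ) - 1) = -(-1 : ℂ) ^ m := by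
    rw [zpow_sub₀ (by norm_num : (-1 : ℂ) ≠ 0), zpow_natCast, zpow_one, div_neg, div_one]
  rw [hpow, neg_smul, neg_neg] at hskew
  have hsum : (∑ᶠ i : ℕ, ((-1 : ℂ) ^ i) •
        W.mode (W.mode ui (((m : ℤ) - 1) + (i : ℤ)) uj) (-1 - (i : ℤ)) W.vacuum)
      = ∑ i ∈ Finset.range (ki + kj + 1 - m), ((-1 : ℂ) ^ i) •
          W.mode (W.mode ui (((m : ℤ) - 1) + (i : ℤ)) uj) (-1 - (i : ℤ)) W.vacuum := by
    refine finsum_eq_sum_of_support_subset _ ?_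
    refine Function.support_subset_iff'.mpr fun i hi' => ?_
    have h2 : ki + kj + 1 - m ≤ i := by simpa using hi'
    rw [W.mode_eq_zero hi hj _ (by omega), W.mode_zero_left, smul_zero]
  rw [hsum] at hskew
  have hdouble : W.mode uj ((m : ℤ) - 1) ui
      = (-1 : ℂ) ^ m • ((-1 : ℂ) ^ m • W.mode uj ((m : ℤ) - 1) ui) := by
    rw [smul_smul, ← mul_pow]
    norm_num
  rw [hdouble, ← hskew, map_smul, map_sum]
  congr 1
  refine Finset.sum_congr rfl fun i _ => ?_
  have eexp : ((m : ℤ) - 1) + (i : ℤ) = ((m + i : ℕ) : ℤ) - 1 := by push_cast; ring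
  rw [eexp]
  by_cases hin : m + i ≤ ki + kj
  · have hx : W.mode ui (((m + i : ℕ) : ℤ) - 1) uj ∈ W.grade (ki + kj - (m + i)) :=
      W.mode_mem_grade hi hj _ _ (by omega)
    rw [map_smul, W.mkQ_Di i _ _ hx, smul_smul]
    have hco : ki + kj - (m + i) + i - 1 = ki - 1 + kj - m := by omega
    rw [hco]
    congr 1
    rw [← mul_assoc, ← mul_pow]
    norm_num
  · have hz : W.mode ui (((m + i : ℕ) : ℤ) - 1) uj = 0 :=
      W.mode_eq_zero hi hj _ (by omega)
    rw [hz, W.mode_zero_left]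
    simp

end GradedVertexAlgebra

section PhiLemmas

open Polynomial

variable {M : Type*} [AddCommGroup M] [Module ℂ M]

lemma Phi_sum_smul {ι : Type*} (F : ℕ → M) (R : ℕ) (s : Finset ι) (c : ι → ℂ) (p : ι → ℂ[X]) :
    ∑ t ∈ Finset.range R, (∑ m ∈ s, c m • p m).coeff t • F t
      = ∑ m ∈ s, c m • ∑ t ∈ Finset.range R, (p m).coeff t • F t := by
  simp only [Polynomial.finset_sum_coeff, Polynomial.coeff_smul, Finset.sum_smul,
    Finset.smul_sum, smul_smul, smul_eq_mul]
  exact Finset.sum_comm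

lemma Phi_shift (F : ℕ → M) (R b m : ℕ) (hm : m ≤ R) :
    ∑ t ∈ Finset.range R, ((1 + X : ℂ[X]) ^ b * X ^ m).coeff t • F t
      = ∑ i ∈ Finset.range (R - m), (b.choose i : ℂ) • F (m + i) := by
  have key : ∀ t, ((1 + X : ℂ[X]) ^ b * X ^ m).coeff t
      = if m ≤ t then (b.choose (t - m) : ℂ) else 0 := by
    intro t
    rw [Polynomial.coeff_mul_X_pow', Polynomial.coeff_one_add_X_pow]
  rw [Finset.range_eq_Ico, ← Finset.sum_Ico_consecutive _ (Nat.zero_le m) hm]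
  have h1 : ∑ t ∈ Finset.Ico 0 m, ((1 + X : ℂ[X]) ^ b * X ^ m).coeff t • F t = 0 := by
    refine Finset.sum_eq_zero fun t ht => ?_
    have : ¬ m ≤ t := by simpa using (Finset.mem_Ico.mp ht).2
    rw [key, if_neg this, zero_smul]
  rw [h1, zero_add, Finset.sum_Ico_eq_sum_range]
  refine Finset.sum_congr rfl fun i _ => ?_
  rw [key, if_pos (Nat.le_add_right m i), Nat.add_sub_cancel_left]

lemma Phi_one_add_X (F : ℕ → M) (R a : ℕ) :
    ∑ t ∈ Finset.range R, ((1 + X : ℂ[X]) ^ a).coeff t • F t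
      = ∑ t ∈ Finset.range R, (a.choose t : ℂ) • F t := by
  refine Finset.sum_congr rfl fun t _ => ?_
  rw [Polynomial.coeff_one_add_X_pow]

lemma poly_id (a kj : ℕ) :
    ∑ m ∈ Finset.range (kj + 1), ((-1 : ℂ) ^ m * (kj.choose m : ℂ)) •
      ((1 + X : ℂ[X]) ^ (a + kj - m) * X ^ m) = (1 + X) ^ a := by
  have h := add_pow (-X : ℂ[X]) (1 + X) kj
  have h2 : ((-X) + (1 + X) : ℂ[X]) = 1 := by ring
  rw [h2, one_pow] at h
  calc ∑ m ∈ Finset.range (kj + 1), ((-1 : ℂ) ^ m * (kj.choose m : ℂ)) •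
        ((1 + X : ℂ[X]) ^ (a + kj - m) * X ^ m)
      = (1 + X) ^ a * ∑ m ∈ Finset.range (kj + 1),
          (-X) ^ m * (1 + X) ^ (kj - m) * (kj.choose m : ℂ[X]) := by
        rw [Finset.mul_sum]
        refine Finset.sum_congr rfl fun m hm => ?_
        have hmle : m ≤ kj := Nat.lt_succ_iff.mp (Finset.mem_range.mp hm)
        have hexp : a + kj - m = a + (kj - m) := by omega
        rw [hexp, pow_add, neg_pow, smul_eq_C_mul]
        simp only [map_mul, map_pow, map_neg, map_one, map_natCast]
        ring
    _ = (1 + X) ^ a * 1 := by rw [← h]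
    _ = (1 + X) ^ a := by ring

lemma key_sum (F : ℕ → M) (a kj : ℕ) :
    ∑ m ∈ Finset.range (kj + 1), (kj.choose m : ℂ) • ((-1 : ℂ) ^ m •
        ∑ i ∈ Finset.range (a + kj + 2 - m), ((a + kj - m).choose i : ℂ) • F (m + i))
      = ∑ t ∈ Finset.range (a + kj + 2), (a.choose t : ℂ) • F t := by
  calc ∑ m ∈ Finset.range (kj + 1), (kj.choose m : ℂ) • ((-1 : ℂ) ^ m •
        ∑ i ∈ Finset.range (a + kj + 2 - m), ((a + kj - m).choose i : ℂ) • F (m + i))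
      = ∑ m ∈ Finset.range (kj + 1), ((-1 : ℂ) ^ m * (kj.choose m : ℂ)) •
          ∑ t ∈ Finset.range (a + kj + 2),
            ((1 + X : ℂ[X]) ^ (a + kj - m) * X ^ m).coeff t • F t := by
        refine Finset.sum_congr rfl fun m hm => ?_
        have hmle : m ≤ kj := Nat.lt_succ_iff.mp (Finset.mem_range.mp hm)
        rw [Phi_shift F (a + kj + 2) (a + kj - m) m (by omega), smul_smul]
        congr 1
        ring
    _ = ∑ t ∈ Finset.range (a + kj + 2),
          (∑ m ∈ Finset.range (kj + 1), ((-1 : ℂ) ^ m * (kj.choose m : ℂ)) •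
            ((1 + X : ℂ[X]) ^ (a + kj - m) * X ^ m)).coeff t • F t :=
        by exact (Phi_sum_smul F (a + kj + 2) (Finset.range (kj + 1))
          (fun m => ((-1 : ℂ) ^ m * (kj.choose m : ℂ)))
          (fun m => ((1 + X : ℂ[X]) ^ (a + kj - m) * X ^ m))).symm
    _ = ∑ t ∈ Finset.range (a + kj + 2), ((1 + X : ℂ[X]) ^ a).coeff t • F t := by
        rw [poly_id]
    _ = ∑ t ∈ Finset.range (a + kj + 2), (a.choose t : ℂ) • F t := Phi_one_add_X F _ a

end PhiLemmas

end ZhuAux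
/-- for `C_1`-generators `u^i`, `u^j` (homogeneous of weights `k_i`, `k_j`)
with `C_1`-relations `R(i,j,k) = u^i_k u^j`, in Zhu's algebra `A(V)` the commutator of the
images satisfies `[o(u^i), o(u^j)] = ∑_{k ≥ 0} C(wt u^i - 1, k) o(R(i,j,k))`. -/
theorem zhu_commutator_of_generators {V : Type*} [AddCommGroup V] [Module ℂ V]
    (W : GradedVertexAlgebra V) (ki kj : ℕ) (ui uj : V)
    (hi : ui ∈ W.grade ki) (hj : uj ∈ W.grade kj) :
    W.O.mkQ (W.starH ki ui uj) - W.O.mkQ (W.starH kj uj ui)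
      = ∑ᶠ k : ℕ, (((ki - 1).choose k : ℂ)) • W.O.mkQ (W.mode ui (k : ℤ) uj) := by
  classical
  by_cases hki : 1 ≤ ki
  · -- general case
    have hA : W.O.mkQ (W.starH ki ui uj)
        = ∑ t ∈ Finset.range (ki + kj + 1), (ki.choose t : ℂ) •
            W.O.mkQ (W.mode ui ((t : ℤ) - 1) uj) := by
      unfold GradedVertexAlgebra.starH
      rw [map_sum]
      simp only [map_smul]
      exact Finset.sum_subset (Finset.range_subset_range.mpr (by omega)) (fun t ht hnt => by
        rw [Nat.choose_eq_zero_of_lt (by simpa using hnt), Nat.cast_zero, zero_smul])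
    have hB : W.O.mkQ (W.starH kj uj ui)
        = ∑ t ∈ Finset.range (ki + kj + 1), ((ki - 1).choose t : ℂ) •
            W.O.mkQ (W.mode ui ((t : ℤ) - 1) uj) := by
      unfold GradedVertexAlgebra.starH
      rw [map_sum]
      simp only [map_smul]
      have hstep : ∀ m ∈ Finset.range (kj + 1),
          (kj.choose m : ℂ) • W.O.mkQ (W.mode uj ((m : ℤ) - 1) ui)
            = (kj.choose m : ℂ) • ((-1 : ℂ) ^ m •
                ∑ i ∈ Finset.range (ki - 1 + kj + 2 - m),
                  ((ki - 1 + kj - m).choose i : ℂ) •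
                    W.O.mkQ (W.mode ui (((m + i : ℕ) : ℤ) - 1) uj)) := by
        intro m hm
        have hmle : m ≤ kj := Nat.lt_succ_iff.mp (Finset.mem_range.mp hm)
        rw [W.mkQ_mode_rev hi hj hki m hmle]
        have hr : ki + kj + 1 - m = ki - 1 + kj + 2 - m := by omega
        rw [hr]
      rw [Finset.sum_congr rfl hstep]
      have hks := key_sum (fun t => W.O.mkQ (W.mode ui ((t : ℤ) - 1) uj)) (ki - 1) kj
      rw [hks]
      have hr2 : ki - 1 + kj + 2 = ki + kj + 1 := by omega
      rw [hr2]
    rw [hA, hB, ← Finset.sum_sub_distrib]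
    have hRHS : (∑ᶠ k : ℕ, (((ki - 1).choose k : ℂ)) • W.O.mkQ (W.mode ui (k : ℤ) uj))
        = ∑ k ∈ Finset.range (ki + kj),
            (((ki - 1).choose k : ℂ)) • W.O.mkQ (W.mode ui (k : ℤ) uj) := by
      refine finsum_eq_sum_of_support_subset _ ?_
      refine Function.support_subset_iff'.mpr fun k hk => ?_
      have hik : ki + kj ≤ k := by simpa using hk
      rw [Nat.choose_eq_zero_of_lt (by omega), Nat.cast_zero, zero_smul]
    rw [hRHS, Finset.sum_range_succ']
    have hf0 : (ki.choose 0 : ℂ) • W.O.mkQ (W.mode ui (((0 : ℕ) : ℤ) - 1) uj)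
        - ((ki - 1).choose 0 : ℂ) • W.O.mkQ (W.mode ui (((0 : ℕ) : ℤ) - 1) uj) = 0 := by
      norm_num
    rw [hf0, add_zero]
    refine Finset.sum_congr rfl fun k hk => ?_
    rw [← sub_smul]
    have hexp : (((k + 1 : ℕ) : ℤ) - 1) = (k : ℤ) := by push_cast; ring
    rw [hexp]
    congr 1
    have e : ki - 1 + 1 = ki := by omega
    have hp : ki.choose (k + 1) = (ki - 1).choose k + (ki - 1).choose (k + 1) := by
      conv_lhs => rw [← e]
      exact Nat.choose_succ_succ _ _
    have hp' := congrArg (Nat.cast : ℕ → ℂ) hp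
    push_cast at hp'
    rw [hp']
    ring
  · -- ki = 0
    have hki0 : ki = 0 := by omega
    subst hki0
    have hvac : W.vacuum ≠ 0 := by
      intro h0
      have hz : ∀ x : V, x = 0 := fun x => by
        have hcx := W.creation x
        rw [h0, map_zero] at hcx
        exact hcx.symm
      haveI : Subsingleton V := ⟨fun a b => by rw [hz a, hz b]⟩
      have h1 := W.grade_zero_dim
      rw [Module.finrank_zero_of_subsingleton] at h1
      exact absurd h1 (by norm_num)
    haveI : FiniteDimensional ℂ (W.grade 0) :=
      FiniteDimensional.of_finrank_pos (by rw [W.grade_zero_dim]; norm_num)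
    have hspan : Submodule.span ℂ {W.vacuum} = W.grade 0 :=
      Submodule.eq_of_le_of_finrank_le
        ((Submodule.span_singleton_le_iff_mem _ _).mpr W.vacuum_mem)
        (by rw [W.grade_zero_dim, finrank_span_singleton hvac])
    have hui : ui ∈ Submodule.span ℂ {W.vacuum} := hspan ▸ hi
    obtain ⟨c, hc⟩ := Submodule.mem_span_singleton.mp hui
    have h1 : W.starH 0 ui uj = c • uj := by
      unfold GradedVertexAlgebra.starH
      rw [Finset.sum_range_one]
      have e : (((0 : ℕ) : ℤ) - 1) = -1 := by omega
      rw [e, ← hc, W.mode_smul_left, W.vacuum_mode, if_pos rfl]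
      norm_num
    have h2 : W.starH kj uj ui = c • uj := by
      unfold GradedVertexAlgebra.starH
      rw [← hc]
      have hterm : ∀ m ∈ Finset.range (kj + 1),
          (kj.choose m : ℂ) • W.mode uj ((m : ℤ) - 1) (c • W.vacuum)
            = if m = 0 then c • uj else 0 := by
        intro m hm
        rw [map_smul]
        rcases Nat.eq_zero_or_pos m with h0 | h1
        · subst h0
          rw [if_pos rfl]
          have e : (((0 : ℕ) : ℤ) - 1) = -1 := by omega
          rw [e, W.creation]
          norm_num
        · rw [if_neg (by omega), W.creation_nonneg uj _ (by omega), smul_zero, smul_zero]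
      rw [Finset.sum_congr rfl hterm]
      simp
    rw [h1, h2, sub_self]
    symm
    refine finsum_eq_zero_of_forall_eq_zero fun k => ?_
    have hmode : W.mode ui (k : ℤ) uj = 0 := by
      rw [← hc, W.mode_smul_left, W.vacuum_mode, if_neg (by omega), smul_zero]
    rw [hmode, map_zero, smul_zero]
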